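/- In G_alt³, for any fixed path p of length 2, the number of critical paths containing p as a subpath is at most |V₂⁺(r)|. -/
import Mathlib


/-- `V₂⁺(r)`: lattice points of `ℤ²` with nonnegative coordinates that are vertices
(extreme points) of the convex hull of the lattice points in the disk of radius `r`. -/
def V2plus (r : ℕ) : Set (ℤ × ℤ) :=
  {p : ℤ × ℤ | 0 ≤ p.1 ∧ 0 ≤ p.2 ∧
    ((p.1 : ℝ), (p.2 : ℝ)) ∈ Set.extremePoints ℝ (convexHull ℝ
      {x : ℝ × ℝ | ∃ q : ℤ × ℤ, (q.1 : ℝ) ^ 2 + (q.2 : ℝ) ^ 2 ≤ (r : ℝ) ^ 2 ∧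
        x = ((q.1 : ℝ), (q.2 : ℝ))})}

/-- The layer-`i` vertex of the critical path of `G_alt³` determined by start vertex
`x ∈ (ℤ/(3Dr)ℤ)⁴` and step vectors `g, g', g'' ∈ V₂⁺(r)`. -/
def cv3 (M : ℕ) (x : Fin 4 → ZMod M) (g g' g'' : ℤ × ℤ) (i : ℕ) : Fin 4 → ZMod M :=
  ![x 0 + (((((i + 2) / 3 : ℕ) : ℤ) * g.1 : ℤ) : ZMod M),
    x 1 + (((((i + 2) / 3 : ℕ) : ℤ) * g.2 + (((i + 1) / 3 : ℕ) : ℤ) * g'.1 : ℤ) : ZMod M),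
    x 2 + (((((i + 1) / 3 : ℕ) : ℤ) * g'.2 + ((i / 3 : ℕ) : ℤ) * g''.1 : ℤ) : ZMod M),
    x 3 + ((((i / 3 : ℕ) : ℤ) * g''.2 : ℤ) : ZMod M)]


lemma zmod_cast_inj (M : ℕ) {a b : ℤ} (h0a : 0 ≤ a) (haM : a < M) (h0b : 0 ≤ b) (hbM : b < M)
    (h : (a : ZMod M) = (b : ZMod M)) : a = b := by
  have := (ZMod.intCast_eq_intCast_iff a b M).mp h
  rwa [Int.ModEq, Int.emod_eq_of_lt h0a haM, Int.emod_eq_of_lt h0b hbM] at this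

lemma V2plus_bounds {r : ℕ} {p : ℤ × ℤ} (hp : p ∈ V2plus r) :
    0 ≤ p.1 ∧ p.1 ≤ r ∧ 0 ≤ p.2 ∧ p.2 ≤ r := by
  obtain ⟨h1, h2, hext⟩ := hp
  obtain ⟨q, hq, heq⟩ := extremePoints_convexHull_subset hext
  have e1 : (p.1 : ℝ) = q.1 := congrArg Prod.fst heq
  have e2 : (p.2 : ℝ) = q.2 := congrArg Prod.snd heq
  rw [← e1, ← e2] at hq
  have h1' : (0:ℝ) ≤ (p.1:ℝ) := by exact_mod_cast h1
  have h2' : (0:ℝ) ≤ (p.2:ℝ) := by exact_mod_cast h2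
  have b1 : (p.1 : ℝ) ≤ r := by
    nlinarith [sq_nonneg ((p.2:ℝ)), sq_nonneg ((p.1:ℝ) - r), Nat.cast_nonneg (α := ℝ) r]
  have b2 : (p.2 : ℝ) ≤ r := by
    nlinarith [sq_nonneg ((p.1:ℝ)), sq_nonneg ((p.2:ℝ) - r), Nat.cast_nonneg (α := ℝ) r]
  exact ⟨h1, by exact_mod_cast b1, h2, by exact_mod_cast b2⟩

lemma V2plus_finite (r : ℕ) : (V2plus r).Finite := by
  apply (Set.finite_Icc ((0:ℤ),(0:ℤ)) ((r:ℤ),(r:ℤ))).subset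
  rintro p hp
  obtain ⟨a1, b1, a2, b2⟩ := V2plus_bounds hp
  exact ⟨⟨a1, a2⟩, ⟨b1, b2⟩⟩

lemma vec_eq {D r : ℕ} (hD : 0 < D) (hr : 0 < r) {a b : ℤ × ℤ}
    (ha : a ∈ V2plus r) (hb : b ∈ V2plus r)
    (h1 : ((a.1 : ℤ) : ZMod (3*D*r)) = ((b.1 : ℤ) : ZMod (3*D*r)))
    (h2 : ((a.2 : ℤ) : ZMod (3*D*r)) = ((b.2 : ℤ) : ZMod (3*D*r))) : a = b := by
  obtain ⟨a1, b1', a2, b2'⟩ := V2plus_bounds ha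
  obtain ⟨c1, d1, c2, d2⟩ := V2plus_bounds hb
  have hrM : (r : ℤ) < (3*D*r : ℕ) := by
    have : r < 3*D*r := by nlinarith
    exact_mod_cast this
  exact Prod.ext (zmod_cast_inj _ a1 (by omega) c1 (by omega) h1)
    (zmod_cast_inj _ a2 (by omega) c2 (by omega) h2)

/-- In `G_alt³`, for any fixed path `p` of length 2 (given by its three
consecutive vertices `w 0, w 1, w 2` in layers `i, i+1, i+2`), the number of critical
paths (indexed by `(x, γ, γ', γ'') ∈ (ℤ/(3Dr)ℤ)⁴ × V₂⁺(r)³`) containing `p` as a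
subpath is at most `|V₂⁺(r)|`. -/
theorem stmt9 (D r : ℕ) (hD : 0 < D) (hr : 0 < r)
    (i : ℕ) (hi : i + 2 ≤ 3 * D)
    (w : Fin 3 → (Fin 4 → ZMod (3 * D * r))) :
    Set.ncard {q : (Fin 4 → ZMod (3 * D * r)) × ((ℤ × ℤ) × (ℤ × ℤ) × (ℤ × ℤ)) |
        q.2.1 ∈ V2plus r ∧ q.2.2.1 ∈ V2plus r ∧ q.2.2.2 ∈ V2plus r ∧
        ∀ t : Fin 3, cv3 (3 * D * r) q.1 q.2.1 q.2.2.1 q.2.2.2 (i + (t : ℕ)) = w t} ≤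
      Set.ncard (V2plus r) := by
  set k := i / 3 with hk
  have hs : i % 3 = 0 ∨ i % 3 = 1 ∨ i % 3 = 2 := by omega
  rcases hs with hs | hs | hs
  · -- g'' is free
    apply Set.ncard_le_ncard_of_injOn (fun q => q.2.2.2) ?_ ?_ (V2plus_finite r)
    · rintro ⟨x, g, g', g''⟩ ⟨h1, h2, h3, h4⟩; exact h3
    · rintro ⟨x, g, g', g''⟩ ⟨hg, hg', hg'', hq⟩ ⟨y, h, h', h''⟩ ⟨hh, hh', hh'', hp⟩ hfree
      dsimp only at hfree hq hp
      obtain rfl : g'' = h'' := hfree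
      have P00 := congrFun (hq 0) 0; have P10 := congrFun (hq 1) 0
      have P01 := congrFun (hq 0) 1; have P11 := congrFun (hq 1) 1; have P21 := congrFun (hq 2) 1
      have P02 := congrFun (hq 0) 2; have P12 := congrFun (hq 1) 2; have P22 := congrFun (hq 2) 2
      have P03 := congrFun (hq 0) 3
      have Q00 := congrFun (hp 0) 0; have Q10 := congrFun (hp 1) 0
      have Q01 := congrFun (hp 0) 1; have Q11 := congrFun (hp 1) 1; have Q21 := congrFun (hp 2) 1
      have Q02 := congrFun (hp 0) 2; have Q12 := congrFun (hp 1) 2; have Q22 := congrFun (hp 2) 2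
      have Q03 := congrFun (hp 0) 3
      simp only [cv3, Matrix.cons_val_zero, Matrix.cons_val_one, Matrix.head_cons, Fin.isValue,
        Matrix.cons_val_two, Matrix.tail_cons, Matrix.cons_val_three, Matrix.head_fin_const,
        Fin.val_zero, Fin.val_one, Fin.val_two, Nat.add_zero,
        show (i+2)/3 = k by omega, show (i+1+2)/3 = k+1 by omega, show (i+2+2)/3 = k+1 by omega,
        show (i+1)/3 = k by omega, show (i+1+1)/3 = k by omega, show (i+2+1)/3 = k+1 by omega,
        show i/3 = k from rfl]
        at P00 P10 P01 P11 P21 P02 P12 P22 P03 Q00 Q10 Q01 Q11 Q21 Q02 Q12 Q22 Q03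
      push_cast at P00 P10 P01 P11 P21 P02 P12 P22 P03 Q00 Q10 Q01 Q11 Q21 Q02 Q12 Q22 Q03
      have e1 : ((g.1 : ℤ) : ZMod (3*D*r)) = ((h.1 : ℤ) : ZMod (3*D*r)) := by
        linear_combination (P10 - P00) - (Q10 - Q00)
      have e2 : ((g.2 : ℤ) : ZMod (3*D*r)) = ((h.2 : ℤ) : ZMod (3*D*r)) := by
        linear_combination (P11 - P01) - (Q11 - Q01)
      have e3 : ((g'.1 : ℤ) : ZMod (3*D*r)) = ((h'.1 : ℤ) : ZMod (3*D*r)) := by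
        linear_combination (P21 - P11) - (Q21 - Q11)
      have e4 : ((g'.2 : ℤ) : ZMod (3*D*r)) = ((h'.2 : ℤ) : ZMod (3*D*r)) := by
        linear_combination (P22 - P12) - (Q22 - Q12)
      obtain rfl : g = h := vec_eq hD hr hg hh e1 e2
      obtain rfl : g' = h' := vec_eq hD hr hg' hh' e3 e4
      simp only [Prod.mk.injEq, and_self, and_true, true_and]
      funext c
      fin_cases c
      · show x 0 = y 0
        linear_combination P00 - Q00
      · show x 1 = y 1
        linear_combination P01 - Q01
      · show x 2 = y 2
        linear_combination P02 - Q02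
      · show x 3 = y 3
        linear_combination P03 - Q03
  · -- g is free
    apply Set.ncard_le_ncard_of_injOn (fun q => q.2.1) ?_ ?_ (V2plus_finite r)
    · rintro ⟨x, g, g', g''⟩ ⟨h1, h2, h3, h4⟩; exact h1
    · rintro ⟨x, g, g', g''⟩ ⟨hg, hg', hg'', hq⟩ ⟨y, h, h', h''⟩ ⟨hh, hh', hh'', hp⟩ hfree
      dsimp only at hfree hq hp
      obtain rfl : g = h := hfree
      have P00 := congrFun (hq 0) 0
      have P01 := congrFun (hq 0) 1; have P11 := congrFun (hq 1) 1
      have P02 := congrFun (hq 0) 2; have P12 := congrFun (hq 1) 2; have P22 := congrFun (hq 2) 2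
      have P03 := congrFun (hq 0) 3; have P13 := congrFun (hq 1) 3; have P23 := congrFun (hq 2) 3
      have Q00 := congrFun (hp 0) 0
      have Q01 := congrFun (hp 0) 1; have Q11 := congrFun (hp 1) 1
      have Q02 := congrFun (hp 0) 2; have Q12 := congrFun (hp 1) 2; have Q22 := congrFun (hp 2) 2
      have Q03 := congrFun (hp 0) 3; have Q13 := congrFun (hp 1) 3; have Q23 := congrFun (hp 2) 3
      simp only [cv3, Matrix.cons_val_zero, Matrix.cons_val_one, Matrix.head_cons, Fin.isValue,
        Matrix.cons_val_two, Matrix.tail_cons, Matrix.cons_val_three, Matrix.head_fin_const,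
        Fin.val_zero, Fin.val_one, Fin.val_two, Nat.add_zero,
        show (i+2)/3 = k+1 by omega, show (i+1+2)/3 = k+1 by omega, show (i+2+2)/3 = k+1 by omega,
        show (i+1)/3 = k by omega, show (i+1+1)/3 = k+1 by omega, show (i+2+1)/3 = k+1 by omega,
        show i/3 = k from rfl]
        at P00 P01 P11 P02 P12 P22 P03 P13 P23 Q00 Q01 Q11 Q02 Q12 Q22 Q03 Q13 Q23
      push_cast at P00 P01 P11 P02 P12 P22 P03 P13 P23 Q00 Q01 Q11 Q02 Q12 Q22 Q03 Q13 Q23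
      have e1 : ((g'.1 : ℤ) : ZMod (3*D*r)) = ((h'.1 : ℤ) : ZMod (3*D*r)) := by
        linear_combination (P11 - P01) - (Q11 - Q01)
      have e2 : ((g'.2 : ℤ) : ZMod (3*D*r)) = ((h'.2 : ℤ) : ZMod (3*D*r)) := by
        linear_combination (P12 - P02) - (Q12 - Q02)
      have e3 : ((g''.1 : ℤ) : ZMod (3*D*r)) = ((h''.1 : ℤ) : ZMod (3*D*r)) := by
        linear_combination (P22 - P12) - (Q22 - Q12)
      have e4 : ((g''.2 : ℤ) : ZMod (3*D*r)) = ((h''.2 : ℤ) : ZMod (3*D*r)) := by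
        linear_combination (P23 - P13) - (Q23 - Q13)
      obtain rfl : g' = h' := vec_eq hD hr hg' hh' e1 e2
      obtain rfl : g'' = h'' := vec_eq hD hr hg'' hh'' e3 e4
      simp only [Prod.mk.injEq, and_self, and_true, true_and]
      funext c
      fin_cases c
      · show x 0 = y 0
        linear_combination P00 - Q00
      · show x 1 = y 1
        linear_combination P01 - Q01
      · show x 2 = y 2
        linear_combination P02 - Q02
      · show x 3 = y 3
        linear_combination P03 - Q03
  · -- g' is free
    apply Set.ncard_le_ncard_of_injOn (fun q => q.2.2.1) ?_ ?_ (V2plus_finite r)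
    · rintro ⟨x, g, g', g''⟩ ⟨h1, h2, h3, h4⟩; exact h2
    · rintro ⟨x, g, g', g''⟩ ⟨hg, hg', hg'', hq⟩ ⟨y, h, h', h''⟩ ⟨hh, hh', hh'', hp⟩ hfree
      dsimp only at hfree hq hp
      obtain rfl : g' = h' := hfree
      have P00 := congrFun (hq 0) 0; have P10 := congrFun (hq 1) 0; have P20 := congrFun (hq 2) 0
      have P01 := congrFun (hq 0) 1; have P11 := congrFun (hq 1) 1; have P21 := congrFun (hq 2) 1
      have P02 := congrFun (hq 0) 2; have P12 := congrFun (hq 1) 2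
      have P03 := congrFun (hq 0) 3; have P13 := congrFun (hq 1) 3
      have Q00 := congrFun (hp 0) 0; have Q10 := congrFun (hp 1) 0; have Q20 := congrFun (hp 2) 0
      have Q01 := congrFun (hp 0) 1; have Q11 := congrFun (hp 1) 1; have Q21 := congrFun (hp 2) 1
      have Q02 := congrFun (hp 0) 2; have Q12 := congrFun (hp 1) 2
      have Q03 := congrFun (hp 0) 3; have Q13 := congrFun (hp 1) 3
      simp only [cv3, Matrix.cons_val_zero, Matrix.cons_val_one, Matrix.head_cons, Fin.isValue,
        Matrix.cons_val_two, Matrix.tail_cons, Matrix.cons_val_three, Matrix.head_fin_const,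
        Fin.val_zero, Fin.val_one, Fin.val_two, Nat.add_zero,
        show (i+2)/3 = k+1 by omega, show (i+1+2)/3 = k+1 by omega, show (i+2+2)/3 = k+2 by omega,
        show (i+1)/3 = k+1 by omega, show (i+1+1)/3 = k+1 by omega, show (i+2+1)/3 = k+1 by omega,
        show i/3 = k from rfl]
        at P00 P10 P20 P01 P11 P21 P02 P12 P03 P13 Q00 Q10 Q20 Q01 Q11 Q21 Q02 Q12 Q03 Q13
      push_cast at P00 P10 P20 P01 P11 P21 P02 P12 P03 P13 Q00 Q10 Q20 Q01 Q11 Q21 Q02 Q12 Q03 Q13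
      have e1 : ((g.1 : ℤ) : ZMod (3*D*r)) = ((h.1 : ℤ) : ZMod (3*D*r)) := by
        linear_combination (P20 - P10) - (Q20 - Q10)
      have e2 : ((g.2 : ℤ) : ZMod (3*D*r)) = ((h.2 : ℤ) : ZMod (3*D*r)) := by
        linear_combination (P21 - P11) - (Q21 - Q11)
      have e3 : ((g''.1 : ℤ) : ZMod (3*D*r)) = ((h''.1 : ℤ) : ZMod (3*D*r)) := by
        linear_combination (P12 - P02) - (Q12 - Q02)
      have e4 : ((g''.2 : ℤ) : ZMod (3*D*r)) = ((h''.2 : ℤ) : ZMod (3*D*r)) := by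
        linear_combination (P13 - P03) - (Q13 - Q03)
      obtain rfl : g = h := vec_eq hD hr hg hh e1 e2
      obtain rfl : g'' = h'' := vec_eq hD hr hg'' hh'' e3 e4
      simp only [Prod.mk.injEq, and_self, and_true, true_and]
      funext c
      fin_cases c
      · show x 0 = y 0
        linear_combination P00 - Q00
      · show x 1 = y 1
        linear_combination P01 - Q01
      · show x 2 = y 2
        linear_combination P02 - Q02
      · show x 3 = y 3
        linear_combination P03 - Q03
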